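/- Let a ≥ 0, b > 0, λ > 0, F > 0, and real numbers x ≥ 0, y > 0, G, with exponents 1 < γ < 2 < 2θ < p. Suppose the Nehari condition a·x + b·y − λF − G = 0 holds together with the second-order condition 2a·x + 2θb·y − γλF − pG > 0. Then a(1/2 − 1/p)x + b(1/(2θ) − 1/p)y − λ(1/γ − 1/p)F < a(p−2)((γ−2)/(2pγ))x + b(p−2θ)((γ−2θ)/(2pθγ))y < 0. -/

import Mathlib

theorem stmt_6 (a b l F x y G γ θ p : ℝ) (ha : 0 ≤ a) (hb : 0 < b) (hl : 0 < l)
    (hF : 0 < F) (hx : 0 ≤ x) (hy : 0 < y)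
    (hγ1 : 1 < γ) (hγ2 : γ < 2) (h2θ : 2 < 2 * θ) (hθp : 2 * θ < p)
    (hNehari : a * x + b * y - l * F - G = 0)
    (hSecond : 2 * a * x + 2 * θ * b * y - γ * l * F - p * G > 0) :
    a * (1 / 2 - 1 / p) * x + b * (1 / (2 * θ) - 1 / p) * y - l * (1 / γ - 1 / p) * F
      < a * (p - 2) * ((γ - 2) / (2 * p * γ)) * x
        + b * (p - 2 * θ) * ((γ - 2 * θ) / (2 * p * θ * γ)) * y ∧
    a * (p - 2) * ((γ - 2) / (2 * p * γ)) * x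
      + b * (p - 2 * θ) * ((γ - 2 * θ) / (2 * p * θ * γ)) * y < 0 := by
  have hθ0 : (1:ℝ) < θ := by linarith
  have hp0 : (0:ℝ) < p := by linarith
  have hγ0 : (0:ℝ) < γ := by linarith
  have hpos : (0:ℝ) < 2 * p * θ * γ := by positivity
  have hG : G = a * x + b * y - l * F := by linarith
  have h1 : p * G = p * a * x + p * b * y - p * (l * F) := by rw [hG]; ring
  have hkey : a * (p - 2) * x + b * (p - 2 * θ) * y < (p - γ) * (l * F) := by
    nlinarith [hSecond, h1]
  constructor
  · rw [show a * (1 / 2 - 1 / p) * x + b * (1 / (2 * θ) - 1 / p) * y - l * (1 / γ - 1 / p) * F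
        = (a * θ * γ * (p - 2) * x + b * γ * (p - 2 * θ) * y - 2 * θ * (p - γ) * (l * F))
          / (2 * p * θ * γ) from by field_simp,
      show a * (p - 2) * ((γ - 2) / (2 * p * γ)) * x
        + b * (p - 2 * θ) * ((γ - 2 * θ) / (2 * p * θ * γ)) * y
        = (a * θ * (p - 2) * (γ - 2) * x + b * (p - 2 * θ) * (γ - 2 * θ) * y)
          / (2 * p * θ * γ) from by field_simp]
    rw [div_lt_div_iff₀ hpos hpos]
    have hd : (0:ℝ) < 4 * p * θ ^ 2 * γ := by positivity
    nlinarith [mul_lt_mul_of_pos_left hkey hd]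
  · have h1 : a * (p - 2) * ((γ - 2) / (2 * p * γ)) * x ≤ 0 := by
      have hc : (γ - 2) / (2 * p * γ) ≤ 0 :=
        le_of_lt (div_neg_of_neg_of_pos (by linarith) (by positivity))
      have hax : 0 ≤ a * (p - 2) * x := mul_nonneg (mul_nonneg ha (by linarith)) hx
      nlinarith [mul_nonpos_of_nonneg_of_nonpos hax hc]
    have h2 : b * (p - 2 * θ) * ((γ - 2 * θ) / (2 * p * θ * γ)) * y < 0 := by
      have hc : (γ - 2 * θ) / (2 * p * θ * γ) < 0 :=
        div_neg_of_neg_of_pos (by linarith) (by positivity)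
      have hby : 0 < b * (p - 2 * θ) * y := mul_pos (mul_pos hb (by linarith)) hy
      nlinarith [mul_neg_of_pos_of_neg hby hc]
    linarith
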